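/- For every integer n ≥ 3, the bivariate polynomials A_{n−1} and A_n satisfy the canonical Poisson-bracket identity (∂A_{n−1}/∂w)·(∂A_n/∂π) − (∂A_{n−1}/∂π)·(∂A_n/∂w) = n·(n−1)·(−1)^{n−1}·w^{n−2} as polynomials in the variables w and π. -/
import Mathlib


open MvPolynomial Finset

/-- The bivariate polynomial
`A_n(w,π) = Σ_{k=0}^{⌊n/2⌋} (n/(n−k))·binom(n−k, k)·w^k·π^{n−2k}` over ℚ,
where `w = X 0` and `π = X 1`. -/
noncomputable def A (n : ℕ) : MvPolynomial (Fin 2) ℚ :=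
  ∑ k ∈ Finset.range (n / 2 + 1),
    C ((n : ℚ) / ((n : ℚ) - (k : ℚ)) * (((n - k).choose k : ℕ) : ℚ)) *
      X 0 ^ k * X 1 ^ (n - 2 * k)

/-- Fibonacci polynomials in `w = X 0`, `π = X 1`. -/
noncomputable def Fb : ℕ → MvPolynomial (Fin 2) ℚ
  | 0 => 0
  | 1 => 1
  | (n+2) => X 1 * Fb (n+1) + X 0 * Fb n

lemma cassini (k : ℕ) : Fb k * Fb (k+2) - Fb (k+1)^2 = -(-X 0)^k := by
  induction k with
  | zero => simp [Fb]
  | succ k ih =>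
    have h2 : Fb (k+2) = X 1 * Fb (k+1) + X 0 * Fb k := by simp [Fb]
    have h3 : Fb (k+3) = X 1 * Fb (k+2) + X 0 * Fb (k+1) := by simp [Fb]
    rw [h3]
    linear_combination (-X 0 : MvPolynomial (Fin 2) ℚ) * ih - Fb (k+2) * h2

lemma sum_extend (n N : ℕ) (h : n/2+1 ≤ N) (c : ℕ → ℚ) (hc : ∀ k, n < 2*k → c k = 0) :
    ∑ k ∈ range (n/2+1), C (c k) * X 0 ^ k * X 1 ^ (n-2*k)
      = ∑ k ∈ range N, (C (c k) * X 0 ^ k * X 1 ^ (n-2*k) : MvPolynomial (Fin 2) ℚ) := by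
  apply Finset.sum_subset (Finset.range_subset_range.2 h)
  intro k _ hk
  simp only [Finset.mem_range, not_lt] at hk
  rw [hc k (by omega), map_zero, zero_mul, zero_mul]

lemma choose_zero_of (n k : ℕ) (h : n < 2*k) : (n-k).choose k = 0 :=
  Nat.choose_eq_zero_of_lt (by omega)

lemma Fb_sum (n : ℕ) : Fb (n+1) = ∑ k ∈ Finset.range (n/2+1),
    C (((n-k).choose k : ℚ)) * X 0 ^ k * X 1 ^ (n - 2*k) := by
  have key : ∀ n, (Fb (n+1) = ∑ k ∈ Finset.range (n/2+1),
      C (((n-k).choose k : ℚ)) * X 0 ^ k * X 1 ^ (n - 2*k)) ∧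
      (Fb (n+2) = ∑ k ∈ Finset.range ((n+1)/2+1),
      C ((((n+1)-k).choose k : ℚ)) * X 0 ^ k * X 1 ^ ((n+1) - 2*k)) := by
    intro n
    induction n with
    | zero => constructor <;> simp [Fb]
    | succ n ih =>
      refine ⟨ih.2, ?_⟩
      have h3 : Fb (n+3) = X 1 * Fb (n+2) + X 0 * Fb (n+1) := by simp [Fb]
      rw [h3, ih.1, ih.2]
      rw [sum_extend (n+1) (n/2+2) (by omega) _ (fun k hk => by
        rw [choose_zero_of (n+1) k hk]; norm_num)]
      have hr : (n+2)/2 + 1 = n/2 + 2 := by omega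
      rw [show (∑ k ∈ Finset.range ((n+2)/2+1),
          C ((((n+2)-k).choose k : ℚ)) * X 0 ^ k * X 1 ^ ((n+2) - 2*k) : MvPolynomial (Fin 2) ℚ)
        = ∑ k ∈ Finset.range (n/2+1+1),
          C ((((n+2)-k).choose k : ℚ)) * X 0 ^ k * X 1 ^ ((n+2) - 2*k) from by rw [hr]]
      rw [Finset.sum_range_succ' (fun k => (C ((((n+2)-k).choose k : ℚ)) * X 0 ^ k * X 1 ^ ((n+2) - 2*k) : MvPolynomial (Fin 2) ℚ)) (n/2+1)]
      rw [show (n/2+2) = n/2+1+1 from rfl]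
      rw [Finset.sum_range_succ' (fun k => (C ((((n+1)-k).choose k : ℚ)) * X 0 ^ k * X 1 ^ ((n+1) - 2*k) : MvPolynomial (Fin 2) ℚ)) (n/2+1)]
      have hsum : (∑ k ∈ Finset.range (n/2+1),
          C ((((n+2)-(k+1)).choose (k+1) : ℚ)) * X 0 ^ (k+1) * X 1 ^ ((n+2) - 2*(k+1)) : MvPolynomial (Fin 2) ℚ)
          = X 1 * (∑ k ∈ Finset.range (n/2+1),
              C ((((n+1)-(k+1)).choose (k+1) : ℚ)) * X 0 ^ (k+1) * X 1 ^ ((n+1) - 2*(k+1)))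
            + X 0 * (∑ k ∈ Finset.range (n/2+1),
              C (((n-k).choose k : ℚ)) * X 0 ^ k * X 1 ^ (n - 2*k)) := by
        rw [Finset.mul_sum, Finset.mul_sum, ← Finset.sum_add_distrib]
        refine Finset.sum_congr rfl (fun k hk => ?_)
        simp only [Finset.mem_range] at hk
        rcases Nat.lt_or_ge (2*k) n with h | h
        · obtain ⟨d, rfl⟩ : ∃ d, n = 2*k + (d+1) := ⟨n-2*k-1, by omega⟩
          rw [show 2*k+(d+1)+1-(k+1) = k+d+1 from by omega,
            show 2*k+(d+1)+2-(k+1) = (k+d+1)+1 from by omega,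
            show 2*k+(d+1)+1-2*(k+1) = d from by omega,
            show 2*k+(d+1)+2-2*(k+1) = d+1 from by omega,
            show 2*k+(d+1)-k = k+d+1 from by omega,
            show 2*k+(d+1)-2*k = d+1 from by omega,
            Nat.choose_succ_succ, Nat.cast_add, map_add, pow_succ, pow_succ]
          ring
        · have hnk : n = 2*k := by omega
          rw [show n+1-(k+1) = k from by omega, show n+2-(k+1) = k+1 from by omega,
            show n+1-2*(k+1) = 0 from by omega, show n+2-2*(k+1) = 0 from by omega,
            show n-k = k from by omega, show n-2*k = 0 from by omega,
            Nat.choose_succ_self, Nat.choose_self, Nat.choose_self]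
          push_cast
          simp [pow_succ]
          ring
      rw [hsum, mul_add]
      have hE : (X 1 : MvPolynomial (Fin 2) ℚ) *
          (C (((n+1-0).choose 0 : ℚ)) * X 0 ^ 0 * X 1 ^ ((n+1) - 2*0))
          = C (((n+2-0).choose 0 : ℚ)) * X 0 ^ 0 * X 1 ^ ((n+2) - 2*0) := by
        simp only [Nat.choose_zero_right, Nat.cast_one, map_one, pow_zero,
          Nat.sub_zero, Nat.mul_zero]
        rw [show n+2 = (n+1)+1 from rfl, pow_succ]
        ring
      rw [hE]
      ring
  exact (key n).1

lemma natcore (k d : ℕ) : (k+d+1).choose k * (d+1) = (k+d).choose k * (k+d+1) := by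
  have h1 := Nat.choose_succ_right_eq (k+d+1) k
  rw [show k+d+1-k = d+1 from by omega] at h1
  have h2 : (k+d+1) * (k+d).choose k = (k+d+1).choose (k+1) * (k+1) := by
    simpa [Nat.succ_eq_add_one] using Nat.add_one_mul_choose_eq (k+d) k
  calc (k+d+1).choose k * (d+1) = (k+d+1).choose (k+1) * (k+1) := h1.symm
    _ = (k+d).choose k * (k+d+1) := by rw [← h2]; ring

lemma key1 (n k : ℕ) (hk : 2*k ≤ n+1) :
    ((n+1:ℕ):ℚ)/(((n+1:ℕ):ℚ)-(k:ℚ)) * (((n+1-k).choose k : ℕ):ℚ) * ((n+1-2*k : ℕ):ℚ)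
    = ((n+1:ℕ):ℚ) * (((n-k).choose k : ℕ):ℚ) := by
  rcases Nat.lt_or_ge n (2*k) with h | h
  · rw [show n+1-2*k = 0 from by omega, show n-k = k-1 from by omega]
    rw [Nat.choose_eq_zero_of_lt (by omega : k-1 < k)]
    push_cast
    ring
  · obtain ⟨d, rfl⟩ : ∃ d, n = 2*k+d := ⟨n-2*k, by omega⟩
    rw [show 2*k+d+1-k = k+d+1 from by omega, show 2*k+d+1-2*k = d+1 from by omega,
      show 2*k+d-k = k+d from by omega]
    have hden : ((2*k+d+1:ℕ):ℚ) - (k:ℚ) = ((k+d+1:ℕ):ℚ) := by push_cast; ring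
    have hne : ((k+d+1:ℕ):ℚ) ≠ 0 := Nat.cast_ne_zero.2 (by omega)
    rw [hden, div_mul_eq_mul_div, div_mul_eq_mul_div, div_eq_iff hne]
    have := natcore k d
    have this2 := congrArg (Nat.cast : ℕ → ℚ) this
    push_cast at this2 ⊢
    linear_combination (2*(k:ℚ)+d+1) * this2

lemma key0 (n k : ℕ) (hk : 2*(k+1) ≤ n+2) :
    ((n+2:ℕ):ℚ)/(((n+2:ℕ):ℚ)-((k+1:ℕ):ℚ)) * (((n+2-(k+1)).choose (k+1) : ℕ):ℚ) * ((k+1:ℕ):ℚ)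
    = ((n+2:ℕ):ℚ) * (((n-k).choose k : ℕ):ℚ) := by
  obtain ⟨d, rfl⟩ : ∃ d, n = 2*k+d := ⟨n-2*k, by omega⟩
  rw [show 2*k+d+2-(k+1) = k+d+1 from by omega, show 2*k+d-k = k+d from by omega]
  have hden : ((2*k+d+2:ℕ):ℚ) - ((k+1:ℕ):ℚ) = ((k+d+1:ℕ):ℚ) := by push_cast; ring
  have hne : ((k+d+1:ℕ):ℚ) ≠ 0 := Nat.cast_ne_zero.2 (by omega)
  rw [hden, div_mul_eq_mul_div, div_mul_eq_mul_div, div_eq_iff hne]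
  have h2 : (k+d+1) * (k+d).choose k = (k+d+1).choose (k+1) * (k+1) := by
    simpa [Nat.succ_eq_add_one] using Nat.add_one_mul_choose_eq (k+d) k
  have h2' := congrArg (Nat.cast : ℕ → ℚ) h2
  push_cast at h2' ⊢
  linear_combination (-(2*(k:ℚ)+2+d)) * h2'

lemma pdp_term (a : ℚ) (k e : ℕ) :
    pderiv (1 : Fin 2) (C a * X 0 ^ k * X 1 ^ e : MvPolynomial (Fin 2) ℚ)
      = C (a * e) * X 0 ^ k * X 1 ^ (e-1) := by
  simp [pderiv_mul, pderiv_pow, pderiv_X_self, pderiv_X_of_ne, pderiv_C]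
  ring

lemma pdw_term (a : ℚ) (k e : ℕ) :
    pderiv (0 : Fin 2) (C a * X 0 ^ k * X 1 ^ e : MvPolynomial (Fin 2) ℚ)
      = C (a * k) * X 0 ^ (k-1) * X 1 ^ e := by
  simp [pderiv_mul, pderiv_pow, pderiv_X_self, pderiv_X_of_ne, pderiv_C]
  ring

lemma pd1 (n : ℕ) : pderiv (1 : Fin 2) (A (n+1)) = C (((n+1:ℕ)):ℚ) * Fb (n+1) := by
  rw [A, map_sum, Fb_sum n, Finset.mul_sum]
  calc ∑ k ∈ Finset.range ((n+1)/2+1),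
        pderiv (1 : Fin 2) (C (((n+1:ℕ):ℚ) / (((n+1:ℕ):ℚ) - (k:ℚ)) * (((n+1-k).choose k : ℕ):ℚ)) *
          X 0 ^ k * X 1 ^ ((n+1) - 2*k))
      = ∑ k ∈ Finset.range ((n+1)/2+1),
          C ((((n+1:ℕ):ℚ) / (((n+1:ℕ):ℚ) - (k:ℚ)) * (((n+1-k).choose k : ℕ):ℚ)) * (((n+1) - 2*k : ℕ):ℚ)) *
            X 0 ^ k * X 1 ^ (((n+1) - 2*k) - 1) := by
        exact Finset.sum_congr rfl (fun k _ => pdp_term _ _ _)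
    _ = ∑ k ∈ Finset.range ((n+1)/2+1),
          C (((n+1:ℕ):ℚ) * (((n-k).choose k : ℕ):ℚ)) * X 0 ^ k * X 1 ^ (n - 2*k) := by
        refine Finset.sum_congr rfl (fun k hk => ?_)
        simp only [Finset.mem_range] at hk
        congr 2
        · exact congrArg C (key1 n k (by omega))
        · omega
    _ = ∑ k ∈ Finset.range (n/2+1),
          C (((n+1:ℕ):ℚ) * (((n-k).choose k : ℕ):ℚ)) * X 0 ^ k * X 1 ^ (n - 2*k) := by
        rw [sum_extend n ((n+1)/2+1) (by omega) _ (fun k hk => by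
          rw [choose_zero_of n k hk]; norm_num)]
    _ = ∑ k ∈ Finset.range (n/2+1),
          C (((n+1:ℕ)):ℚ) * (C (((n-k).choose k : ℚ)) * X 0 ^ k * X 1 ^ (n - 2*k)) := by
        refine Finset.sum_congr rfl (fun k _ => ?_)
        rw [← mul_assoc, ← mul_assoc, ← map_mul]

lemma pd0 (n : ℕ) : pderiv (0 : Fin 2) (A (n+2)) = C (((n+2:ℕ)):ℚ) * Fb (n+1) := by
  rw [A, map_sum, Fb_sum n, Finset.mul_sum]
  rw [show (n+2)/2+1 = n/2+1+1 from by omega]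
  calc ∑ k ∈ Finset.range (n/2+1+1),
        pderiv (0 : Fin 2) (C (((n+2:ℕ):ℚ) / (((n+2:ℕ):ℚ) - (k:ℚ)) * (((n+2-k).choose k : ℕ):ℚ)) *
          X 0 ^ k * X 1 ^ ((n+2) - 2*k))
      = ∑ k ∈ Finset.range (n/2+1+1),
          C ((((n+2:ℕ):ℚ) / (((n+2:ℕ):ℚ) - (k:ℚ)) * (((n+2-k).choose k : ℕ):ℚ)) * (k:ℚ)) *
            X 0 ^ (k-1) * X 1 ^ ((n+2) - 2*k) := by
        exact Finset.sum_congr rfl (fun k _ => pdw_term _ _ _)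
    _ = ∑ k ∈ Finset.range (n/2+1),
          C ((((n+2:ℕ):ℚ) / (((n+2:ℕ):ℚ) - ((k+1:ℕ):ℚ)) * (((n+2-(k+1)).choose (k+1) : ℕ):ℚ)) * ((k+1:ℕ):ℚ)) *
            X 0 ^ ((k+1)-1) * X 1 ^ ((n+2) - 2*(k+1)) := by
        rw [Finset.sum_range_succ' (fun k => (C ((((n+2:ℕ):ℚ) / (((n+2:ℕ):ℚ) - (k:ℚ)) * (((n+2-k).choose k : ℕ):ℚ)) * (k:ℚ)) *
            X 0 ^ (k-1) * X 1 ^ ((n+2) - 2*k) : MvPolynomial (Fin 2) ℚ)) (n/2+1)]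
        simp
    _ = ∑ k ∈ Finset.range (n/2+1),
          C (((n+2:ℕ):ℚ) * (((n-k).choose k : ℕ):ℚ)) * X 0 ^ k * X 1 ^ (n - 2*k) := by
        refine Finset.sum_congr rfl (fun k hk => ?_)
        simp only [Finset.mem_range] at hk
        rw [show (k+1)-1 = k from rfl]
        congr 2
        · exact congrArg C (key0 n k (by omega))
        · omega
    _ = ∑ k ∈ Finset.range (n/2+1),
          C (((n+2:ℕ)):ℚ) * (C (((n-k).choose k : ℚ)) * X 0 ^ k * X 1 ^ (n - 2*k)) := by
        refine Finset.sum_congr rfl (fun k _ => ?_)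
        rw [← mul_assoc, ← mul_assoc, ← map_mul]

theorem poisson_bracket_A_pred (n : ℕ) (hn : 3 ≤ n) :
    pderiv (0 : Fin 2) (A (n - 1)) * pderiv (1 : Fin 2) (A n)
      - pderiv (1 : Fin 2) (A (n - 1)) * pderiv (0 : Fin 2) (A n)
      = C ((n : ℚ) * ((n : ℚ) - 1) * (-1) ^ (n - 1)) * X 0 ^ (n - 2) := by
  obtain ⟨m, rfl⟩ : ∃ m, n = m + 3 := ⟨n - 3, by omega⟩
  rw [show m+3-1 = m+2 from by omega, show m+3-2 = m+1 from by omega]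
  have e1 : pderiv (0:Fin 2) (A (m+2)) = C (((m+2:ℕ)):ℚ) * Fb (m+1) := pd0 m
  have e2 : pderiv (1:Fin 2) (A (m+2)) = C (((m+2:ℕ)):ℚ) * Fb (m+2) := pd1 (m+1)
  have e3 : pderiv (0:Fin 2) (A (m+3)) = C (((m+3:ℕ)):ℚ) * Fb (m+2) := pd0 (m+1)
  have e4 : pderiv (1:Fin 2) (A (m+3)) = C (((m+3:ℕ)):ℚ) * Fb (m+3) := pd1 (m+2)
  rw [e1, e2, e3, e4]
  have hx : (-X 0 : MvPolynomial (Fin 2) ℚ) = C (-1:ℚ) * X 0 := by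
    rw [map_neg, map_one]; ring
  have hcas := cassini (m+1)
  rw [hx, mul_pow] at hcas
  have hc : (C ((((m+3:ℕ)):ℚ) * ((((m+3:ℕ)):ℚ)-1) * (-1:ℚ)^(m+2)) : MvPolynomial (Fin 2) ℚ)
      = -(C (((m+2:ℕ)):ℚ) * C (((m+3:ℕ)):ℚ) * C (-1:ℚ)^(m+1)) := by
    rw [← map_pow, ← map_mul, ← map_mul, ← map_neg]
    congr 1
    push_cast
    ring
  rw [hc]
  linear_combination (C (((m+2:ℕ)):ℚ) * C (((m+3:ℕ)):ℚ)) * hcas
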